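/- arXiv:2004.12826 — 4 statements merged into one kernel-verified Lean document; each statement's English description precedes it below -/
import Mathlib

section
/- Let φ: [1,∞) → (0,∞) be C¹, strictly increasing, strictly concave, with φ(x) ≤ x for all x ≥ 1 and x ↦ φ(x)/x nonincreasing. With H_φ(u) = ∫₁ᵘ ds/φ(s) and H_φ⁻¹ its inverse, one has the submultiplicativity inequality H_φ⁻¹(s + t) ≤ H_φ⁻¹(s) · H_φ⁻¹(t) for all s, t ≥ 0. -/
open MeasureTheory intervalIntegral

theorem stmt_1 (φ Hinv : ℝ → ℝ)
    (hC1 : ContDiffOn ℝ 1 φ (Set.Ici 1))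
    (hmono : StrictMonoOn φ (Set.Ici 1))
    (hconc : StrictConcaveOn ℝ (Set.Ici 1) φ)
    (hpos : ∀ x ≥ (1:ℝ), 0 < φ x)
    (hle : ∀ x ≥ (1:ℝ), φ x ≤ x)
    (hratio : ∀ x y : ℝ, 1 ≤ x → x ≤ y → φ y / y ≤ φ x / x)
    (hinv_ge : ∀ t ≥ (0:ℝ), 1 ≤ Hinv t)
    (hinv_left : ∀ u ≥ (1:ℝ), Hinv (∫ s in (1:ℝ)..u, 1 / φ s) = u)
    (hinv_right : ∀ t ≥ (0:ℝ), (∫ s in (1:ℝ)..(Hinv t), 1 / φ s) = t) :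
    ∀ s t : ℝ, 0 ≤ s → 0 ≤ t → Hinv (s + t) ≤ Hinv s * Hinv t := by
  intro s t hs ht
  set a := Hinv s with ha
  set b := Hinv t with hb
  have ha1 : 1 ≤ a := hinv_ge s hs
  have hb1 : 1 ≤ b := hinv_ge t ht
  have ha0 : (0:ℝ) < a := lt_of_lt_of_le one_pos ha1
  have hab1 : (1:ℝ) ≤ a * b := by nlinarith
  -- continuity of 1/φ on [1,∞)
  have hcont : ContinuousOn (fun x => 1 / φ x) (Set.Ici 1) := by
    apply ContinuousOn.div continuousOn_const hC1.continuousOn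
    intro x hx; exact (hpos x hx).ne'
  have hint : ∀ u v : ℝ, 1 ≤ u → 1 ≤ v →
      IntervalIntegrable (fun x => 1 / φ x) volume u v := by
    intro u v hu hv
    apply (hcont.mono ?_).intervalIntegrable
    intro x hx
    rcases Set.mem_uIcc.mp hx with h | h
    · exact le_trans hu h.1
    · exact le_trans hv h.1
  -- change of variables
  have hsub : (∫ x in a..(a*b), 1 / φ x) = ∫ x in (1:ℝ)..b, a * (1 / φ (a * x)) := by
    have := intervalIntegral.integral_comp_mul_left (fun x => 1 / φ x) ha0.ne'
      (a := (1:ℝ)) (b := b)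
    rw [intervalIntegral.integral_const_mul, this]
    simp only [smul_eq_mul, mul_one]
    rw [← mul_assoc, mul_inv_cancel₀ ha0.ne', one_mul]
  -- pointwise bound
  have hpt : ∀ x ∈ Set.Icc (1:ℝ) b, 1 / φ x ≤ a * (1 / φ (a * x)) := by
    intro x hx
    have hx1 : (1:ℝ) ≤ x := hx.1
    have hx0 : (0:ℝ) < x := lt_of_lt_of_le one_pos hx1
    have hax : x ≤ a * x := le_mul_of_one_le_left hx0.le ha1
    have hr := hratio x (a * x) hx1 hax
    have h1 : 0 < φ x := hpos x hx1
    have h2 : 0 < φ (a * x) := hpos (a * x) (le_trans hx1 hax)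
    rw [div_le_div_iff₀ (by positivity) hx0] at hr
    rw [mul_one_div, div_le_div_iff₀ h1 h2]
    nlinarith
  -- integrability of the substituted integrand
  have hint2 : IntervalIntegrable (fun x => a * (1 / φ (a * x))) volume 1 b := by
    apply ContinuousOn.intervalIntegrable
    apply ContinuousOn.mul continuousOn_const
    apply ContinuousOn.div continuousOn_const
    · apply hC1.continuousOn.comp (continuous_const.mul continuous_id).continuousOn
      intro x hx
      have h1x : (1:ℝ) ≤ x := by
        rcases Set.mem_uIcc.mp hx with h | h
        · exact h.1
        · exact le_trans hb1 h.1
      show a * x ∈ Set.Ici (1:ℝ)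
      simp only [Set.mem_Ici]; nlinarith
    · intro x hx
      have h1x : (1:ℝ) ≤ x := by
        rcases Set.mem_uIcc.mp hx with h | h
        · exact h.1
        · exact le_trans hb1 h.1
      exact (hpos (a * x) (by nlinarith)).ne'
  have hkey : (∫ x in (1:ℝ)..b, 1 / φ x) ≤ ∫ x in a..(a*b), 1 / φ x := by
    rw [hsub]
    exact intervalIntegral.integral_mono_on hb1 (hint 1 b le_rfl hb1) hint2 hpt
  -- split integral
  have hsplit : (∫ x in (1:ℝ)..(a*b), 1 / φ x)
      = (∫ x in (1:ℝ)..a, 1 / φ x) + ∫ x in a..(a*b), 1 / φ x := by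
    rw [intervalIntegral.integral_add_adjacent_intervals (hint 1 a le_rfl ha1)
      (hint a (a*b) ha1 hab1)]
  have hHge : s + t ≤ ∫ x in (1:ℝ)..(a*b), 1 / φ x := by
    have h1 : (∫ x in (1:ℝ)..a, 1 / φ x) = s := hinv_right s hs
    have h2 : (∫ x in (1:ℝ)..b, 1 / φ x) = t := hinv_right t ht
    rw [hsplit, h1]
    linarith [hkey, h2.symm.le]
  -- conclude by monotonicity of H
  by_contra hcon
  push_neg at hcon
  set c := Hinv (s + t) with hc
  have hc1 : 1 ≤ c := hinv_ge (s + t) (by linarith)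
  have hHc : (∫ x in (1:ℝ)..c, 1 / φ x) = s + t := hinv_right (s + t) (by linarith)
  have hposint : 0 < ∫ x in (a*b)..c, 1 / φ x := by
    apply intervalIntegral_pos_of_pos_on (hint (a*b) c hab1 hc1) _ hcon
    intro x hx
    have h1x : (1:ℝ) ≤ x := le_trans hab1 hx.1.le
    exact one_div_pos.mpr (hpos x h1x)
  have hsplit2 : (∫ x in (1:ℝ)..c, 1 / φ x)
      = (∫ x in (1:ℝ)..(a*b), 1 / φ x) + ∫ x in (a*b)..c, 1 / φ x := by
    rw [intervalIntegral.integral_add_adjacent_intervals (hint 1 (a*b) le_rfl hab1)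
      (hint (a*b) c hab1 hc1)]
  rw [hsplit2] at hHc
  linarith
end

section
/- Let φ: [1,∞) → (0,∞) be C¹, strictly increasing, strictly concave, with φ(x) ≤ x for all x ≥ 1, and such that φ(x)/x → 0 as x → ∞. Let H_φ⁻¹ be the inverse of H_φ(u) = ∫₁ᵘ ds/φ(s). Then (1/s)·log(H_φ⁻¹(s)) → 0 as s → ∞; consequently, setting r_*(s) = φ(H_φ⁻¹(s)), one has (1/s)·log(r_*(s)) → 0 as s → ∞ (the rate function r_* is subexponential). -/
open Filter

theorem stmt_4 (φ Hinv : ℝ → ℝ)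
    (hC1 : ContDiffOn ℝ 1 φ (Set.Ici 1))
    (hmono : StrictMonoOn φ (Set.Ici 1))
    (hconc : StrictConcaveOn ℝ (Set.Ici 1) φ)
    (hpos : ∀ x ≥ (1:ℝ), 0 < φ x)
    (hle : ∀ x ≥ (1:ℝ), φ x ≤ x)
    (hlim : Tendsto (fun x => φ x / x) atTop (nhds 0))
    (hinv_ge : ∀ t ≥ (0:ℝ), 1 ≤ Hinv t)
    (hinv_left : ∀ u ≥ (1:ℝ), Hinv (∫ s in (1:ℝ)..u, 1 / φ s) = u)
    (hinv_right : ∀ t ≥ (0:ℝ), (∫ s in (1:ℝ)..(Hinv t), 1 / φ s) = t) :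
    Tendsto (fun s => Real.log (Hinv s) / s) atTop (nhds 0)
      ∧ Tendsto (fun s => Real.log (φ (Hinv s)) / s) atTop (nhds 0) := by
  have hcont : ContinuousOn φ (Set.Ici 1) := hC1.continuousOn
  have hint : ∀ a b : ℝ, 1 ≤ a → a ≤ b →
      IntervalIntegrable (fun s => 1 / φ s) MeasureTheory.volume a b := by
    intro a b ha hab
    apply ContinuousOn.intervalIntegrable
    have hsub : Set.uIcc a b ⊆ Set.Ici 1 := by
      rw [Set.uIcc_of_le hab]
      intro x hx; exact le_trans ha hx.1
    apply ContinuousOn.div continuousOn_const (hcont.mono hsub)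
    intro x hx
    exact (hpos x (hsub hx)).ne'
  have key : ∀ ε > (0:ℝ), ∃ M ≥ (1:ℝ), ∀ t ≥ (0:ℝ),
      Real.log (Hinv t) ≤ ε * t + Real.log M := by
    intro ε hε
    have h1 : ∀ᶠ x in atTop, φ x / x < ε := hlim.eventually_lt_const hε
    obtain ⟨M₀, hM₀⟩ := eventually_atTop.mp h1
    refine ⟨max M₀ 1, le_max_right _ _, fun t ht => ?_⟩
    set M := max M₀ 1 with hMdef
    have hM1 : (1:ℝ) ≤ M := le_max_right _ _
    have hφε : ∀ x ≥ M, φ x ≤ ε * x := by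
      intro x hx
      have hx1 : (1:ℝ) ≤ x := le_trans hM1 hx
      have hx0 : (0:ℝ) < x := by linarith
      have h2 := hM₀ x (le_trans (le_max_left _ _) hx)
      calc φ x = (φ x / x) * x := by field_simp
        _ ≤ ε * x := by nlinarith
    set u := Hinv t with hudef
    have hu1 : (1:ℝ) ≤ u := hinv_ge t ht
    have hu0 : (0:ℝ) < u := by linarith
    have hM0 : (0:ℝ) < M := by linarith
    by_cases hu : u ≤ M
    · have : Real.log u ≤ Real.log M := Real.log_le_log hu0 hu
      nlinarith [mul_nonneg hε.le ht]
    · have hMu : M ≤ u := (not_le.mp hu).le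
      have hi1 := hint 1 M le_rfl hM1
      have hi2 := hint M u hM1 hMu
      have e1 : (∫ s in (1:ℝ)..u, 1 / φ s)
          = (∫ s in (1:ℝ)..M, 1 / φ s) + ∫ s in M..u, 1 / φ s :=
        (intervalIntegral.integral_add_adjacent_intervals hi1 hi2).symm
      have e2 : 0 ≤ ∫ s in (1:ℝ)..M, 1 / φ s := by
        apply intervalIntegral.integral_nonneg hM1
        intro s hs
        have := hpos s hs.1
        positivity
      have hi3 : IntervalIntegrable (fun s : ℝ => ε⁻¹ * (1 / s)) MeasureTheory.volume M u := by
        apply ContinuousOn.intervalIntegrable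
        apply ContinuousOn.mul continuousOn_const
        apply ContinuousOn.div continuousOn_const continuousOn_id
        intro x hx
        rw [Set.uIcc_of_le hMu] at hx
        have : (0:ℝ) < x := lt_of_lt_of_le hM0 hx.1
        exact this.ne'
      have e3 : (∫ s in M..u, ε⁻¹ * (1 / s)) ≤ ∫ s in M..u, 1 / φ s := by
        apply intervalIntegral.integral_mono_on hMu hi3 hi2
        intro s hs
        have hs1 : (1:ℝ) ≤ s := le_trans hM1 hs.1
        have hs0 : (0:ℝ) < s := lt_of_lt_of_le hM0 hs.1
        have hφs := hpos s hs1
        have hφεs := hφε s hs.1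
        have h6 := mul_le_mul_of_nonneg_left hφεs (inv_nonneg.mpr hε.le)
        rw [← mul_assoc, inv_mul_cancel₀ hε.ne', one_mul] at h6
        rw [mul_one_div, div_le_div_iff₀ hs0 hφs]
        nlinarith
      have e4 : (∫ s in M..u, ε⁻¹ * (1 / s)) = ε⁻¹ * (Real.log u - Real.log M) := by
        rw [intervalIntegral.integral_const_mul]
        rw [integral_one_div (by intro h; rw [Set.uIcc_of_le hMu] at h; linarith [h.1])]
        rw [Real.log_div hu0.ne' hM0.ne']
      have ht' : (∫ s in (1:ℝ)..u, 1 / φ s) = t := hinv_right t ht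
      have : ε⁻¹ * (Real.log u - Real.log M) ≤ t := by
        rw [← ht', e1]; rw [e4] at e3; linarith
      have h5 := mul_le_mul_of_nonneg_left this hε.le
      rw [← mul_assoc, mul_inv_cancel₀ hε.ne', one_mul] at h5
      linarith
  have hlog_nonneg : ∀ t ≥ (0:ℝ), 0 ≤ Real.log (Hinv t) :=
    fun t ht => Real.log_nonneg (hinv_ge t ht)
  have main : Tendsto (fun s => Real.log (Hinv s) / s) atTop (nhds 0) := by
    rw [Metric.tendsto_atTop]
    intro ε hε
    obtain ⟨M, hM1, hM⟩ := key (ε/2) (by linarith)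
    refine ⟨max 1 (2 * Real.log M / ε + 1), fun s hs => ?_⟩
    have hs1 : 1 ≤ s := le_trans (le_max_left _ _) hs
    have hs0 : 0 < s := by linarith
    have hs2 : 2 * Real.log M / ε + 1 ≤ s := le_trans (le_max_right _ _) hs
    have hlogM : 0 ≤ Real.log M := Real.log_nonneg hM1
    have h1 : Real.log (Hinv s) ≤ ε/2 * s + Real.log M := hM s (by linarith)
    have h2 : 0 ≤ Real.log (Hinv s) := hlog_nonneg s (by linarith)
    rw [Real.dist_eq, sub_zero, abs_of_nonneg (div_nonneg h2 hs0.le), div_lt_iff₀ hs0]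
    have h3 : 2 * Real.log M ≤ (s - 1) * ε := by
      rw [← div_le_iff₀ hε]; linarith
    nlinarith
  refine ⟨main, ?_⟩
  have low : Tendsto (fun s : ℝ => Real.log (φ 1) / s) atTop (nhds 0) :=
    tendsto_const_nhds.div_atTop tendsto_id
  apply tendsto_of_tendsto_of_tendsto_of_le_of_le' low main
  · filter_upwards [eventually_ge_atTop (1:ℝ)] with s hs
    have hu1 := hinv_ge s (by linarith)
    have hs0 : (0:ℝ) < s := by linarith
    have hφ1 : φ 1 ≤ φ (Hinv s) :=
      hmono.monotoneOn (Set.self_mem_Ici) hu1 hu1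
    have hl := Real.log_le_log (hpos 1 le_rfl) hφ1
    exact (div_le_div_iff_of_pos_right hs0).mpr hl
  · filter_upwards [eventually_ge_atTop (1:ℝ)] with s hs
    have hu1 := hinv_ge s (by linarith)
    have hs0 : (0:ℝ) < s := by linarith
    have hl := Real.log_le_log (hpos (Hinv s) hu1) (hle (Hinv s) hu1)
    exact (div_le_div_iff_of_pos_right hs0).mpr hl
end

section
/- Let φ: [1,∞) → (0,∞) be C¹, strictly increasing, strictly concave, with φ(x) ≤ x and φ(x)/x nonincreasing. Then for all s, t ≥ 0: φ(H_φ⁻¹(s + t)) ≤ H_φ⁻¹(t) · φ(H_φ⁻¹(s)). In other words, (H_φ⁻¹)'(s+t) ≤ H_φ⁻¹(t) · (H_φ⁻¹)'(s). -/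
open MeasureTheory intervalIntegral

theorem stmt_6 (φ Hinv : ℝ → ℝ)
    (hC1 : ContDiffOn ℝ 1 φ (Set.Ici 1))
    (hmono : StrictMonoOn φ (Set.Ici 1))
    (hconc : StrictConcaveOn ℝ (Set.Ici 1) φ)
    (hpos : ∀ x ≥ (1:ℝ), 0 < φ x)
    (hle : ∀ x ≥ (1:ℝ), φ x ≤ x)
    (hratio : ∀ x y : ℝ, 1 ≤ x → x ≤ y → φ y / y ≤ φ x / x)
    (hinv_ge : ∀ t ≥ (0:ℝ), 1 ≤ Hinv t)
    (hinv_left : ∀ u ≥ (1:ℝ), Hinv (∫ s in (1:ℝ)..u, 1 / φ s) = u)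
    (hinv_right : ∀ t ≥ (0:ℝ), (∫ s in (1:ℝ)..(Hinv t), 1 / φ s) = t) :
    ∀ s t : ℝ, 0 ≤ s → 0 ≤ t → φ (Hinv (s + t)) ≤ Hinv t * φ (Hinv s) := by
  intro s t hs ht
  have hcont : ContinuousOn φ (Set.Ici 1) := hC1.continuousOn
  -- integrability of 1/φ on any interval in [1,∞)
  have hint : ∀ u v : ℝ, 1 ≤ u → 1 ≤ v →
      IntervalIntegrable (fun x => 1 / φ x) volume u v := by
    intro u v hu hv
    apply ContinuousOn.intervalIntegrable
    have hsub : Set.uIcc u v ⊆ Set.Ici 1 := by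
      intro x hx
      have := hx.1
      have : min u v ≤ x := hx.1
      exact le_trans (le_min hu hv) this
    exact ContinuousOn.div continuousOn_const (hcont.mono hsub)
      (fun x hx => ne_of_gt (hpos x (hsub hx)))
  set a := Hinv s with ha
  set b := Hinv t with hb
  have ha1 : 1 ≤ a := hinv_ge s hs
  have hb1 : 1 ≤ b := hinv_ge t ht
  have ha0 : 0 < a := lt_of_lt_of_le one_pos ha1
  have hab1 : 1 ≤ a * b := le_trans ha1 (le_mul_of_one_le_right (by linarith) hb1)
  -- key ratio inequality: φ (a * v) ≤ a * φ v for v ≥ 1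
  have hkey : ∀ v : ℝ, 1 ≤ v → φ (a * v) ≤ a * φ v := by
    intro v hv
    have hav : v ≤ a * v := le_mul_of_one_le_left (le_trans zero_le_one hv) ha1
    have := hratio v (a * v) hv hav
    have hv0 : 0 < v := lt_of_lt_of_le one_pos hv
    rw [div_le_div_iff₀ (by positivity) hv0] at this
    nlinarith [hpos v hv]
  -- H(a*b) ≥ s + t
  have hHab : s + t ≤ ∫ x in (1:ℝ)..(a*b), 1 / φ x := by
    have hsplit : (∫ x in (1:ℝ)..(a*b), 1 / φ x)
        = (∫ x in (1:ℝ)..a, 1 / φ x) + ∫ x in a..(a*b), 1 / φ x :=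
      (integral_add_adjacent_intervals (hint 1 a le_rfl ha1) (hint a (a*b) ha1 hab1)).symm
    have h1 : (∫ x in (1:ℝ)..a, 1 / φ x) = s := hinv_right s hs
    -- change of variables
    have hcov : (∫ x in a..(a*b), 1 / φ x) = a * ∫ v in (1:ℝ)..b, 1 / φ (a * v) := by
      rw [integral_comp_mul_left (f := fun x => 1 / φ x) (ne_of_gt ha0)]
      simp [mul_one, smul_eq_mul]
      field_simp
    -- comparison: 1/φ v ≤ a / φ (a*v)
    have hcmp : (∫ v in (1:ℝ)..b, 1 / φ v) ≤ ∫ v in (1:ℝ)..b, a * (1 / φ (a * v)) := by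
      apply integral_mono_on hb1 (hint 1 b le_rfl hb1)
      · -- integrability of v ↦ a * (1/φ(a*v))
        apply ContinuousOn.intervalIntegrable
        apply ContinuousOn.mul continuousOn_const
        apply ContinuousOn.div continuousOn_const
        · apply hcont.comp (continuousOn_const.mul continuousOn_id)
          intro x hx
          have hx1 : 1 ≤ x := le_trans (le_min le_rfl hb1) hx.1
          exact le_trans hx1 (le_mul_of_one_le_left (le_trans zero_le_one hx1) ha1)
        · intro x hx
          have hx1 : 1 ≤ x := le_trans (le_min le_rfl hb1) hx.1
          exact ne_of_gt (hpos _ (le_trans hx1 (le_mul_of_one_le_left (le_trans zero_le_one hx1) ha1)))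
      · intro x hx
        have hx1 : 1 ≤ x := hx.1
        have h1 : 0 < φ x := hpos x hx1
        have h2 : 0 < φ (a * x) := hpos _ (le_trans hx1 (le_mul_of_one_le_left (le_trans zero_le_one hx1) ha1))
        rw [mul_one_div, div_le_div_iff₀ h1 h2, one_mul]
        exact hkey x hx1
    have hcmp' : t ≤ a * ∫ v in (1:ℝ)..b, 1 / φ (a * v) := by
      have := hinv_right t ht
      rw [← this]
      calc (∫ x in (1:ℝ)..b, 1 / φ x) ≤ ∫ v in (1:ℝ)..b, a * (1 / φ (a * v)) := hcmp
        _ = a * ∫ v in (1:ℝ)..b, 1 / φ (a * v) := integral_const_mul a _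
    rw [hsplit, h1, hcov]
    linarith
  -- monotonicity: Hinv (s+t) ≤ a*b
  set w := ∫ x in (1:ℝ)..(a*b), 1 / φ x with hw
  have hw0 : 0 ≤ w := le_trans (by linarith) hHab
  have hinvw : Hinv w = a * b := hinv_left (a*b) hab1
  have hmono_inv : Hinv (s + t) ≤ a * b := by
    by_contra hcon
    push_neg at hcon
    rw [← hinvw] at hcon
    -- Hinv w < Hinv (s+t); derive w < s+t
    have hc2 : 1 ≤ Hinv w := hinv_ge w hw0
    have hc1 : 1 ≤ Hinv (s+t) := hinv_ge (s+t) (by linarith)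
    have hsplit2 : (∫ x in (1:ℝ)..(Hinv (s+t)), 1 / φ x)
        = (∫ x in (1:ℝ)..(Hinv w), 1 / φ x) + ∫ x in (Hinv w)..(Hinv (s+t)), 1 / φ x :=
      (integral_add_adjacent_intervals (hint 1 _ le_rfl hc2) (hint _ _ hc2 hc1)).symm
    have hpos2 : 0 < ∫ x in (Hinv w)..(Hinv (s+t)), 1 / φ x := by
      apply intervalIntegral_pos_of_pos_on (hint _ _ hc2 hc1) _ hcon
      intro x hx
      exact div_pos one_pos (hpos x (le_trans hc2 hx.1.le))
    have e1 : (∫ x in (1:ℝ)..(Hinv (s+t)), 1 / φ x) = s + t := hinv_right (s+t) (by linarith)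
    have e2 : (∫ x in (1:ℝ)..(Hinv w), 1 / φ x) = w := hinv_right w hw0
    rw [e1, e2] at hsplit2
    linarith
  -- finish: φ monotone, then ratio
  have hst1 : 1 ≤ Hinv (s+t) := hinv_ge (s+t) (by linarith)
  have h1 : φ (Hinv (s + t)) ≤ φ (a * b) :=
    hmono.monotoneOn hst1 hab1 hmono_inv
  have h2 : φ (a * b) ≤ b * φ a := by
    have := hratio a (a*b) ha1 (le_mul_of_one_le_right (le_trans zero_le_one ha1) hb1)
    rw [div_le_div_iff₀ (by positivity) ha0] at this
    nlinarith [hpos a ha1]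
  calc φ (Hinv (s+t)) ≤ φ (a * b) := h1
    _ ≤ b * φ a := h2
end

section
/- Let φ: [1,∞) → (0,∞) be C¹, strictly increasing, strictly concave, with φ(x) ≤ x, φ(x)/x nonincreasing. Let H_φ⁻¹ be the inverse of H_φ(u) = ∫₁ᵘ ds/φ(s). Let V ≥ 1, K ≥ 0, t ≥ 0, and let c ∈ {0,1}. If D is any real number with D ≤ −φ(V) + K·c, then 2φ(H_φ⁻¹(H_φ(V)+t)) + 2·(φ(H_φ⁻¹(H_φ(V)+t))/φ(V))·D − φ(H_φ⁻¹(t)) ≤ 2K·H_φ⁻¹(t)·c − φ(H_φ⁻¹(t)). -/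
open MeasureTheory intervalIntegral Set

theorem stmt_7 (φ Hinv : ℝ → ℝ)
    (hC1 : ContDiffOn ℝ 1 φ (Set.Ici 1))
    (hmono : StrictMonoOn φ (Set.Ici 1))
    (hconc : StrictConcaveOn ℝ (Set.Ici 1) φ)
    (hpos : ∀ x ≥ (1:ℝ), 0 < φ x)
    (hle : ∀ x ≥ (1:ℝ), φ x ≤ x)
    (hratio : ∀ x y : ℝ, 1 ≤ x → x ≤ y → φ y / y ≤ φ x / x)
    (hinv_ge : ∀ t ≥ (0:ℝ), 1 ≤ Hinv t)
    (hinv_left : ∀ u ≥ (1:ℝ), Hinv (∫ s in (1:ℝ)..u, 1 / φ s) = u)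
    (hinv_right : ∀ t ≥ (0:ℝ), (∫ s in (1:ℝ)..(Hinv t), 1 / φ s) = t)
    (V K t D c : ℝ) (hV : 1 ≤ V) (hK : 0 ≤ K) (ht : 0 ≤ t)
    (hc : c = 0 ∨ c = 1)
    (hD : D ≤ -φ V + K * c) :
    2 * φ (Hinv ((∫ s in (1:ℝ)..V, 1 / φ s) + t))
      + 2 * (φ (Hinv ((∫ s in (1:ℝ)..V, 1 / φ s) + t)) / φ V) * D
      - φ (Hinv t)
      ≤ 2 * K * Hinv t * c - φ (Hinv t) := by
  set H : ℝ → ℝ := fun u => ∫ s in (1:ℝ)..u, 1 / φ s with hHdef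
  have hφc : ContinuousOn φ (Set.Ici 1) := hC1.continuousOn
  have hcont : ContinuousOn (fun s => 1 / φ s) (Set.Ici (1:ℝ)) :=
    continuousOn_const.div hφc (fun x hx => (hpos x hx).ne')
  have hinteg : ∀ a b : ℝ, 1 ≤ a → 1 ≤ b →
      IntervalIntegrable (fun s => 1 / φ s) volume a b := by
    intro a b ha hb
    refine (hcont.mono ?_).intervalIntegrable
    intro x hx
    exact le_trans (le_min ha hb) hx.1
  -- H is strictly monotone on [1, ∞)
  have hHadd : ∀ a b : ℝ, 1 ≤ a → 1 ≤ b → H b = H a + ∫ s in a..b, 1 / φ s := by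
    intro a b ha hb
    rw [hHdef]
    simp only
    rw [← intervalIntegral.integral_add_adjacent_intervals (hinteg 1 a le_rfl ha)
      (hinteg a b ha hb)]
  have hHlt : ∀ a b : ℝ, 1 ≤ a → a < b → H a < H b := by
    intro a b ha hab
    have hb : (1:ℝ) ≤ b := ha.trans hab.le
    rw [hHadd a b ha hb]
    have hposint : 0 < ∫ s in a..b, 1 / φ s := by
      refine intervalIntegral.intervalIntegral_pos_of_pos_on (hinteg a b ha hb) ?_ hab
      intro x hx
      exact one_div_pos.mpr (hpos x (ha.trans hx.1.le))
    linarith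
  have hHmono : ∀ a b : ℝ, 1 ≤ a → a ≤ b → H a ≤ H b := by
    intro a b ha hab
    rcases eq_or_lt_of_le hab with rfl | h
    · exact le_rfl
    · exact (hHlt a b ha h).le
  have hH1 : H 1 = 0 := by simp [hHdef]
  have hHV0 : 0 ≤ H V := by rw [← hH1]; exact hHmono 1 V le_rfl hV
  set A := Hinv t with hA
  have hA1 : 1 ≤ A := hinv_ge t ht
  have hA0 : (0:ℝ) < A := lt_of_lt_of_le one_pos hA1
  have hV0 : (0:ℝ) < V := lt_of_lt_of_le one_pos hV
  -- key: H (V * A) ≥ H V + t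
  have hsub : (∫ s in V..V * A, 1 / φ s) = V * ∫ u in (1:ℝ)..A, 1 / φ (V * u) := by
    have := intervalIntegral.integral_comp_mul_left (fun s => 1 / φ s) (a := 1) (b := A)
      (c := V) hV0.ne'
    rw [this, mul_one, smul_eq_mul]
    rw [← mul_assoc, mul_inv_cancel₀ hV0.ne', one_mul]
  have hcomp_cont : ContinuousOn (fun u => V * (1 / φ (V * u))) (Set.Icc (1:ℝ) A) := by
    refine continuousOn_const.mul (hcont.comp (continuousOn_const.mul continuousOn_id) ?_)
    intro x hx
    have h1 : (1:ℝ) ≤ V * x := by nlinarith [hx.1]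
    simpa using h1
  have hcomp_integ : IntervalIntegrable (fun u => V * (1 / φ (V * u))) volume 1 A := by
    refine (hcomp_cont.mono ?_).intervalIntegrable
    rw [Set.uIcc_of_le hA1]
  have hmono_int : t ≤ ∫ u in (1:ℝ)..A, V * (1 / φ (V * u)) := by
    have := intervalIntegral.integral_mono_on (μ := volume) hA1 (hinteg 1 A le_rfl hA1)
      hcomp_integ ?_
    · rw [hA] at this ⊢
      rw [hinv_right t ht] at this
      exact this
    · intro x hx
      have hx1 : (1:ℝ) ≤ x := hx.1
      have hVx : x ≤ V * x := le_mul_of_one_le_left (by linarith) hV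
      have h1Vx : (1:ℝ) ≤ V * x := hx1.trans hVx
      have hr := hratio x (V * x) hx1 hVx
      have hφx : 0 < φ x := hpos x hx1
      have hφVx : 0 < φ (V * x) := hpos _ h1Vx
      have hkey2 : φ (V * x) ≤ V * φ x := by
        rw [div_le_div_iff₀ (by linarith) (by linarith)] at hr
        nlinarith
      have heq : V * (1 / φ (V * x)) = V / φ (V * x) := by ring
      rw [heq, div_le_div_iff₀ hφx hφVx]
      nlinarith
  have hkey : H V + t ≤ H (V * A) := by
    have h1VA : (1:ℝ) ≤ V * A := one_le_mul_of_one_le_of_one_le hV hA1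
    rw [hHadd V (V * A) hV h1VA, hsub]
    have : (∫ u in (1:ℝ)..A, V * (1 / φ (V * u))) = V * ∫ u in (1:ℝ)..A, 1 / φ (V * u) := by
      rw [← intervalIntegral.integral_const_mul]
    rw [← this]
    linarith [hmono_int]
  -- W ≤ V * A
  set W := Hinv (H V + t) with hW
  have hHVt0 : 0 ≤ H V + t := by linarith
  have hW1 : 1 ≤ W := hinv_ge _ hHVt0
  have hHW : H W = H V + t := hinv_right _ hHVt0
  have hWle : W ≤ V * A := by
    by_contra hlt
    push_neg at hlt
    have h1VA : (1:ℝ) ≤ V * A := one_le_mul_of_one_le_of_one_le hV hA1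
    have := hHlt (V * A) W h1VA hlt
    rw [hHW] at this
    linarith
  -- φ W ≤ A * φ V
  have hφW : φ W ≤ A * φ V := by
    have h1VA : (1:ℝ) ≤ V * A := one_le_mul_of_one_le_of_one_le hV hA1
    have h1 : φ W ≤ φ (V * A) := by
      rcases eq_or_lt_of_le hWle with heq | h
      · rw [heq]
      · exact (hmono hW1 h1VA h).le
    have hr := hratio V (V * A) hV (le_mul_of_one_le_right hV0.le hA1)
    have hφV : 0 < φ V := hpos V hV
    have hφVA : 0 < φ (V * A) := hpos _ h1VA
    rw [div_le_div_iff₀ (by positivity) hV0] at hr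
    nlinarith
  -- finish
  have hφV : 0 < φ V := hpos V hV
  have hφW0 : 0 < φ W := hpos W hW1
  have hrat : φ W / φ V ≤ A := by
    rw [div_le_iff₀ hφV]; linarith
  have hKc : 0 ≤ K * c := by
    rcases hc with rfl | rfl <;> simp [hK]
  have hdiv : (φ W / φ V) * φ V = φ W := div_mul_cancel₀ _ hφV.ne'
  have hratpos : 0 < φ W / φ V := div_pos hφW0 hφV
  nlinarith [mul_le_mul_of_nonneg_left hD (le_of_lt hratpos),
    mul_le_mul_of_nonneg_right hrat hKc]
end
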